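/- arXiv:1404.4428 — 3 statements merged into one kernel-verified Lean document; each statement's English description precedes it below -/
import Mathlib

section
/- Let n and l be positive integers and m an integer with gcd(m, n) = 1, and let m* be a multiplicative inverse of m mod n. Then S(1 + l·n·m*, l·n²) = 2/(l·n²) + l − 3. -/
open scoped Classical
open Finset

/-- The sawtooth function `((x))`. -/
noncomputable def saw (x : ℝ) : ℝ :=
  if ∃ z : ℤ, (z : ℝ) = x then 0 else x - ⌊x⌋ - 1/2

/-- The classical Dedekind sum `s(m,n)`. -/
noncomputable def ded (m n : ℤ) : ℝ :=
  ∑ k ∈ Finset.Icc (1 : ℤ) n, saw ((k : ℝ) / n) * saw ((m : ℝ) * k / n)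

/-- The normalized Dedekind sum `S(m,n) = 12 s(m,n)`. -/
noncomputable def Sded (m n : ℤ) : ℝ := 12 * ded m n


lemma Ico_succ_insert (N : ℤ) (h : 0 ≤ N) : Ico (0:ℤ) (N+1) = insert N (Ico 0 N) := by
  ext x; simp; omega

lemma sum_Ico_id (N : ℤ) (h : 0 ≤ N) : 2 * ∑ k ∈ Ico (0:ℤ) N, k = N * (N-1) := by
  refine Int.le_induction (motive := fun N _ => 2 * ∑ k ∈ Ico (0:ℤ) N, k = N * (N-1)) ?_ ?_ N h
  · simp
  · intro N hN ih
    rw [Ico_succ_insert N hN, Finset.sum_insert (by simp)]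
    ring_nf; ring_nf at ih; linarith

lemma sum_Ico_sq (N : ℤ) (h : 0 ≤ N) : 6 * ∑ k ∈ Ico (0:ℤ) N, k^2 = N * (N-1) * (2*N-1) := by
  refine Int.le_induction (motive := fun N _ => 6 * ∑ k ∈ Ico (0:ℤ) N, k^2 = N * (N-1) * (2*N-1)) ?_ ?_ N h
  · simp
  · intro N hN ih
    rw [Ico_succ_insert N hN, Finset.sum_insert (by simp)]
    ring_nf; ring_nf at ih; linarith

lemma sum_split (a b : ℤ) (f : ℤ → ℤ) (h0 : 0 ≤ a) (hab : a ≤ b) :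
    ∑ k ∈ Ico (0:ℤ) b, f k = ∑ k ∈ Ico (0:ℤ) a, f k + ∑ k ∈ Ico a b, f k := by
  rw [← Finset.sum_union (by rw [Finset.disjoint_left]; intro x; simp; omega)]
  congr 1; ext x; simp; omega

lemma sum_Ico_id' (a b : ℤ) (h0 : 0 ≤ a) (hab : a ≤ b) :
    2 * ∑ k ∈ Ico a b, k = b * (b-1) - a * (a-1) := by
  have h3 := sum_split a b (fun k => k) h0 hab
  have h1 := sum_Ico_id a h0
  have h2 := sum_Ico_id b (le_trans h0 hab)
  linarith

lemma sum_reindex {M : Type*} [AddCommMonoid M] (f : ℤ → M) (q n : ℤ) (hn : 0 < n) :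
    ∑ k ∈ Ico (0:ℤ) (n*q), f k = ∑ t ∈ Ico (0:ℤ) q, ∑ u ∈ Ico (0:ℤ) n, f (n*t+u) := by
  rw [← Finset.sum_product']
  refine Finset.sum_nbij' (fun k => (k / n, k % n)) (fun p => n * p.1 + p.2) ?_ ?_ ?_ ?_ ?_
  · intro k hk
    simp only [Finset.mem_Ico, Finset.mem_product] at *
    refine ⟨⟨Int.ediv_nonneg hk.1 hn.le, ?_⟩, Int.emod_nonneg k hn.ne', Int.emod_lt_of_pos k hn⟩
    rw [Int.ediv_lt_iff_lt_mul hn]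
    calc k < n * q := hk.2
    _ = q * n := mul_comm _ _
  · intro p hp
    simp only [Finset.mem_Ico, Finset.mem_product] at *
    constructor
    · have := hp.1.1; have := hp.2.1; positivity
    · nlinarith [hp.1.2, hp.2.2, hp.1.1, hp.2.1]
  · intro k _; exact Int.mul_ediv_add_emod k n
  · intro p hp
    simp only [Finset.mem_Ico, Finset.mem_product] at hp
    have h1 : (n * p.1 + p.2) / n = p.1 := by
      rw [add_comm, mul_comm, Int.add_mul_ediv_right _ _ hn.ne',
        Int.ediv_eq_zero_of_lt hp.2.1 hp.2.2, zero_add]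
    have h2 : (n * p.1 + p.2) % n = p.2 := by
      rw [add_comm, mul_comm, Int.add_mul_emod_self_right, Int.emod_eq_of_lt hp.2.1 hp.2.2]
    rw [h1, h2]
  · intro k _
    rw [Int.mul_ediv_add_emod k n]

lemma sum_perm {M : Type*} [AddCommMonoid M] (f : ℤ → M) (n m mstar : ℤ) (hn : 0 < n)
    (hinv : m * mstar ≡ 1 [ZMOD n]) :
    ∑ u ∈ Ico (0:ℤ) n, f ((mstar * u) % n) = ∑ u ∈ Ico (0:ℤ) n, f u := by
  have key : ∀ x y : ℤ, x * y ≡ 1 [ZMOD n] → ∀ u ∈ Ico (0:ℤ) n, (x * (y * u % n)) % n = u := by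
    intro x y hxy u hu
    simp only [Finset.mem_Ico] at hu
    calc (x * (y * u % n)) % n = (x * (y * u)) % n := by
          rw [Int.mul_emod, Int.emod_emod_of_dvd _ dvd_rfl, ← Int.mul_emod]
    _ = ((x * y) * u) % n := by ring_nf
    _ = (1 * u) % n := by
          have hxy' : (x * y) % n = 1 % n := hxy
          rw [Int.mul_emod, hxy', ← Int.mul_emod]
    _ = u := by rw [one_mul, Int.emod_eq_of_lt hu.1 hu.2]
  have hinv' : mstar * m ≡ 1 [ZMOD n] := by rwa [mul_comm] at hinv
  refine Finset.sum_nbij' (fun u => (mstar * u) % n) (fun u => (m * u) % n) ?_ ?_ ?_ ?_ ?_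
  · intro u _; simp only [Finset.mem_Ico]
    exact ⟨Int.emod_nonneg _ hn.ne', Int.emod_lt_of_pos _ hn⟩
  · intro u _; simp only [Finset.mem_Ico]
    exact ⟨Int.emod_nonneg _ hn.ne', Int.emod_lt_of_pos _ hn⟩
  · intro u hu; exact key m mstar hinv u hu
  · intro u hu; exact key mstar m hinv' u hu
  · intro u _; rfl

lemma saw_int_div (j c : ℤ) (hc : 0 < c) :
    saw ((j:ℝ)/c) = if c ∣ j then 0 else ((j % c : ℤ):ℝ)/c - 1/2 := by
  have hc' : (c:ℝ) ≠ 0 := by exact_mod_cast hc.ne'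
  have hiff : (∃ z : ℤ, (z : ℝ) = (j:ℝ)/c) ↔ c ∣ j := by
    constructor
    · rintro ⟨z, hz⟩
      refine ⟨z, ?_⟩
      have h1 : (z : ℝ) * c = j := by field_simp at hz; linarith [hz]
      exact_mod_cast (by linarith : (j:ℝ) = (c:ℝ) * z)
    · rintro ⟨z, rfl⟩
      exact ⟨z, by push_cast; field_simp⟩
  rw [saw, if_congr hiff rfl rfl]
  split_ifs with h
  · rfl
  · have hdm : (j:ℝ)/c = ((j / c : ℤ):ℝ) + ((j % c : ℤ):ℝ)/c := by
      have hZ : (j / c) * c + j % c = j := by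
        linarith [Int.mul_ediv_add_emod j c, mul_comm (j / c) c]
      have hR : (j:ℝ) = ((j / c : ℤ):ℝ) * c + ((j % c : ℤ):ℝ) := by
        exact_mod_cast (congrArg (Int.cast : ℤ → ℝ) hZ).symm
      rw [hR, add_div, mul_div_assoc, div_self hc', mul_one]
    have hfl : ⌊(j:ℝ)/c⌋ = j / c := by
      rw [hdm, Int.floor_intCast_add]
      have h0 : (0:ℝ) ≤ ((j % c : ℤ):ℝ)/c := by
        apply div_nonneg _ (by exact_mod_cast hc.le)
        exact_mod_cast Int.emod_nonneg j hc.ne'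
      have h1 : ((j % c : ℤ):ℝ)/c < 1 := by
        rw [div_lt_one (by exact_mod_cast hc)]
        exact_mod_cast Int.emod_lt_of_pos j hc
      rw [Int.floor_eq_zero_iff.2 ⟨h0, h1⟩, add_zero]
    rw [hfl, hdm]
    push_cast
    ring

lemma rho_shift (n t u mstar : ℤ) : (mstar * (n * t + u)) % n = (mstar * u) % n := by
  have h : mstar * (n * t + u) = mstar * u + n * (mstar * t) := by ring
  rw [h, Int.add_mul_emod_self_left]

lemma keymod (n l mstar k : ℤ) (hn : 0 < n) (hl : 0 < l)
    (hk0 : 0 ≤ k) (hkc : k < l * n ^ 2) :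
    ((1 + l * n * mstar) * k) % (l * n ^ 2) =
      k + l * n * ((mstar * k) % n) -
        (if l * n ^ 2 ≤ k + l * n * ((mstar * k) % n) then l * n ^ 2 else 0) := by
  set ρ := (mstar * k) % n with hρdef
  have hρ0 : 0 ≤ ρ := Int.emod_nonneg _ hn.ne'
  have hρn : ρ < n := Int.emod_lt_of_pos _ hn
  have hsplit : (1 + l * n * mstar) * k = (k + l * n * ρ) + (l * n ^ 2) * ((mstar * k) / n) := by
    have h1 : n * ((mstar * k) / n) + ρ = mstar * k := Int.mul_ediv_add_emod (mstar * k) n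
    nlinarith [h1]
  have hmod : ((1 + l * n * mstar) * k) % (l * n ^ 2) = (k + l * n * ρ) % (l * n ^ 2) := by
    rw [hsplit, Int.add_mul_emod_self_left]
  have hub : l * n * ρ ≤ l * n * (n - 1) := by
    apply mul_le_mul_of_nonneg_left (by omega) (by positivity)
  have hub2 : k + l * n * ρ < 2 * (l * n ^ 2) := by nlinarith
  rw [hmod]
  split_ifs with h
  · rw [show k + l * n * ρ = (k + l * n * ρ - l * n ^ 2) + (l * n ^ 2) * 1 by ring,
      Int.add_mul_emod_self_left]
    rw [Int.emod_eq_of_lt (by omega) (by omega)]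
    ring
  · push_neg at h
    rw [Int.emod_eq_of_lt (by positivity) h]
    ring

lemma cond_iff (n l u t ρ : ℤ) (hn : 0 < n) (hl : 0 < l)
    (hu : 0 ≤ u) (hun : u < n) (hρ : 0 ≤ ρ) (hρn : ρ < n) :
    l * n ^ 2 ≤ n * t + u + l * n * ρ ↔ l * n - l * ρ ≤ t := by
  constructor
  · intro h
    have h1 : n * (l * n - l * ρ - 1) < n * t := by nlinarith
    have := (mul_lt_mul_iff_right₀ hn).mp h1
    omega
  · intro h
    have h1 : n * (l * n - l * ρ) ≤ n * t := mul_le_mul_of_nonneg_left h hn.le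
    nlinarith

lemma filter_eq (n l u ρ : ℤ) (hn : 0 < n) (hl : 0 < l)
    (hu : 0 ≤ u) (hun : u < n) (hρ : 0 ≤ ρ) (hρn : ρ < n) :
    (Ico (0:ℤ) (l*n)).filter (fun t => l * n ^ 2 ≤ n * t + u + l * n * ρ)
      = Ico (l * n - l * ρ) (l * n) := by
  have hlρ : l * ρ ≤ l * (n - 1) := mul_le_mul_of_nonneg_left (by omega) hl.le
  ext t
  simp only [Finset.mem_filter, Finset.mem_Ico]
  rw [cond_iff n l u t ρ hn hl hu hun hρ hρn]
  constructor
  · rintro ⟨⟨_, h2⟩, h3⟩; exact ⟨h3, h2⟩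
  · rintro ⟨h1, h2⟩; exact ⟨⟨by nlinarith, h2⟩, h1⟩

lemma sum_affine (a b n u : ℤ) (h0 : 0 ≤ a) (hab : a ≤ b) :
    2 * ∑ t ∈ Ico a b, (n * t + u) = n * (b * (b - 1) - a * (a - 1)) + 2 * (b - a) * u := by
  have h1 : 2 * ∑ t ∈ Ico a b, t = b * (b-1) - a * (a-1) := sum_Ico_id' a b h0 hab
  have h2 : ∑ t ∈ Ico a b, (n * t + u) = n * (∑ t ∈ Ico a b, t) + ((b - a).toNat : ℤ) * u := by
    rw [Finset.sum_add_distrib, ← Finset.mul_sum, Finset.sum_const, Int.card_Ico]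
    simp [nsmul_eq_mul]
  have h3 : ((b - a).toNat : ℤ) = b - a := Int.toNat_of_nonneg (by omega)
  rw [h2, h3]; linear_combination n * h1

lemma sum_reindex' {M : Type*} [AddCommMonoid M] (f : ℤ → M) (q n c : ℤ) (hn : 0 < n)
    (hc : c = n*q) :
    ∑ k ∈ Ico (0:ℤ) c, f k = ∑ t ∈ Ico (0:ℤ) q, ∑ u ∈ Ico (0:ℤ) n, f (n*t+u) := by
  subst hc; exact sum_reindex f q n hn

section Main

variable (n l m mstar : ℤ)

lemma rho_bounds (hn : 0 < n) (x : ℤ) :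
    0 ≤ (mstar * x) % n ∧ (mstar * x) % n < n :=
  ⟨Int.emod_nonneg _ hn.ne', Int.emod_lt_of_pos _ hn⟩

lemma lrho_le (hn : 0 < n) (hl : 0 < l) (u : ℤ) :
    0 ≤ l * ((mstar * u) % n) ∧ l * ((mstar * u) % n) ≤ l * (n - 1) := by
  obtain ⟨h1, h2⟩ := rho_bounds n mstar hn u
  exact ⟨mul_nonneg hl.le h1, mul_le_mul_of_nonneg_left (by omega) hl.le⟩

-- P and R
lemma sumP (hn : 0 < n) (hinv : m * mstar ≡ 1 [ZMOD n]) :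
    2 * ∑ u ∈ Ico (0:ℤ) n, (mstar * u) % n = n * (n - 1) := by
  rw [sum_perm (fun x => x) n m mstar hn hinv]
  exact sum_Ico_id n hn.le

lemma sumR (hn : 0 < n) (hinv : m * mstar ≡ 1 [ZMOD n]) :
    6 * ∑ u ∈ Ico (0:ℤ) n, ((mstar * u) % n)^2 = n * (n - 1) * (2*n - 1) := by
  rw [sum_perm (fun x => x^2) n m mstar hn hinv]
  exact sum_Ico_sq n hn.le

lemma sum_kg (hn : 0 < n) (hl : 0 < l) (hinv : m * mstar ≡ 1 [ZMOD n]) :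
    12 * ∑ k ∈ Ico (0:ℤ) (l*n^2), k * (((1 + l*n*mstar) * k) % (l*n^2)) =
      3*(l*n^2)^3 - 6*(l*n^2)^2 + l*(l*n^2)^2 + 2*(l*n^2) := by
  have hq : (0:ℤ) < l*n := mul_pos hl hn
  have hstep : ∀ k ∈ Ico (0:ℤ) (l*n^2),
      k * (((1 + l*n*mstar) * k) % (l*n^2)) =
        k^2 + (l*n) * (k * ((mstar * k) % n)) -
          (if l * n ^ 2 ≤ k + l * n * ((mstar * k) % n) then (l*n^2) * k else 0) := by
    intro k hk
    simp only [Finset.mem_Ico] at hk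
    rw [keymod n l mstar k hn hl hk.1 hk.2]
    split_ifs with h <;> ring
  rw [Finset.sum_congr rfl hstep, Finset.sum_sub_distrib, Finset.sum_add_distrib,
    ← Finset.mul_sum]
  -- the three sums
  have hA := sum_Ico_sq (l*n^2) (by positivity)
  -- B' : sum of k * ρ k
  have hB1 : ∑ k ∈ Ico (0:ℤ) (l*n^2), k * ((mstar * k) % n)
      = ∑ u ∈ Ico (0:ℤ) n, ∑ t ∈ Ico (0:ℤ) (l*n), (n*t+u) * ((mstar * u) % n) := by
    rw [show (l*n^2 : ℤ) = n*(l*n) by ring,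
      sum_reindex (fun k => k * ((mstar * k) % n)) (l*n) n hn, Finset.sum_comm]
    exact Finset.sum_congr rfl fun u _ => Finset.sum_congr rfl fun t _ => by
      rw [rho_shift]
  have hB2 : 2 * ∑ k ∈ Ico (0:ℤ) (l*n^2), k * ((mstar * k) % n)
      = n*(l*n)*((l*n) - 1) * (∑ u ∈ Ico (0:ℤ) n, (mstar * u) % n)
        + 2*(l*n) * (∑ u ∈ Ico (0:ℤ) n, u * ((mstar * u) % n)) := by
    rw [hB1, Finset.mul_sum]
    have hinner : ∀ u ∈ Ico (0:ℤ) n,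
        2 * ∑ t ∈ Ico (0:ℤ) (l*n), (n*t+u) * ((mstar * u) % n)
          = (n*(l*n)*((l*n) - 1)) * ((mstar * u) % n)
            + (2*(l*n)) * (u * ((mstar * u) % n)) := by
      intro u _
      rw [← Finset.sum_mul]
      have hsa := sum_affine 0 (l*n) n u le_rfl hq.le
      linear_combination ((mstar * u) % n) * hsa
    rw [Finset.sum_congr rfl hinner, Finset.sum_add_distrib, ← Finset.mul_sum, ← Finset.mul_sum]
  -- C : the ite sum
  have hC1 : ∑ k ∈ Ico (0:ℤ) (l*n^2),
        (if l * n ^ 2 ≤ k + l * n * ((mstar * k) % n) then (l*n^2) * k else 0)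
      = ∑ u ∈ Ico (0:ℤ) n, ∑ t ∈ Ico (0:ℤ) (l*n),
        (if l * n ^ 2 ≤ n*t+u + l * n * ((mstar * u) % n) then (l*n^2) * (n*t+u) else 0) := by
    rw [sum_reindex' (fun k => if l * n ^ 2 ≤ k + l * n * ((mstar * k) % n) then (l*n^2) * k else 0)
        (l*n) n (l*n^2) hn (by ring), Finset.sum_comm]
    exact Finset.sum_congr rfl fun u _ => Finset.sum_congr rfl fun t _ => by
      rw [rho_shift]
  have hC2 : 2 * ∑ k ∈ Ico (0:ℤ) (l*n^2),
        (if l * n ^ 2 ≤ k + l * n * ((mstar * k) % n) then (l*n^2) * k else 0)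
      = (l*n^2)*n*l*(2*(l*n) - 1) * (∑ u ∈ Ico (0:ℤ) n, (mstar * u) % n)
        - (l*n^2)*n*l^2 * (∑ u ∈ Ico (0:ℤ) n, ((mstar * u) % n)^2)
        + 2*(l*n^2)*l * (∑ u ∈ Ico (0:ℤ) n, u * ((mstar * u) % n)) := by
    rw [hC1, Finset.mul_sum]
    have hinner : ∀ u ∈ Ico (0:ℤ) n,
        2 * ∑ t ∈ Ico (0:ℤ) (l*n),
            (if l * n ^ 2 ≤ n*t+u + l * n * ((mstar * u) % n) then (l*n^2) * (n*t+u) else 0)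
          = ((l*n^2)*n*l*(2*(l*n) - 1)) * ((mstar * u) % n)
            - ((l*n^2)*n*l^2) * ((mstar * u) % n)^2
            + (2*(l*n^2)*l) * (u * ((mstar * u) % n)) := by
      intro u hu
      simp only [Finset.mem_Ico] at hu
      obtain ⟨hρ0, hρn⟩ := rho_bounds n mstar hn u
      obtain ⟨hlρ0, hlρle⟩ := lrho_le n l mstar hn hl u
      rw [← Finset.sum_filter, filter_eq n l u ((mstar * u) % n) hn hl hu.1 hu.2 hρ0 hρn,
        ← Finset.mul_sum]
      have hsa := sum_affine (l*n - l*((mstar * u) % n)) (l*n) n u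
        (by linarith) (by linarith)
      linear_combination (l*n^2) * hsa
    rw [Finset.sum_congr rfl hinner]
    rw [Finset.sum_add_distrib, Finset.sum_sub_distrib, ← Finset.mul_sum, ← Finset.mul_sum,
      ← Finset.mul_sum]
  have hP := sumP n m mstar hn hinv
  have hR := sumR n m mstar hn hinv
  linear_combination 2 * hA + 6*(l*n) * hB2 - 6 * hC2
    + (3*n*(l*n)^2*((l*n) - 1) - 3*(l*n^2)*n*l*(2*(l*n) - 1)) * hP
    + ((l*n^2)*n*l^2) * hR

lemma sum_g (hn : 0 < n) (hl : 0 < l) (hinv : m * mstar ≡ 1 [ZMOD n]) :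
    2 * ∑ k ∈ Ico (0:ℤ) (l*n^2), (((1 + l*n*mstar) * k) % (l*n^2)) =
      (l*n^2) * ((l*n^2) - 1) := by
  have hq : (0:ℤ) < l*n := mul_pos hl hn
  have hstep : ∀ k ∈ Ico (0:ℤ) (l*n^2),
      (((1 + l*n*mstar) * k) % (l*n^2)) =
        k + (l*n) * ((mstar * k) % n) -
          (if l * n ^ 2 ≤ k + l * n * ((mstar * k) % n) then (l*n^2) else 0) := by
    intro k hk
    simp only [Finset.mem_Ico] at hk
    rw [keymod n l mstar k hn hl hk.1 hk.2]
  rw [Finset.sum_congr rfl hstep, Finset.sum_sub_distrib, Finset.sum_add_distrib,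
    ← Finset.mul_sum]
  have hA := sum_Ico_id (l*n^2) (by positivity)
  have hB1 : ∑ k ∈ Ico (0:ℤ) (l*n^2), ((mstar * k) % n)
      = ∑ u ∈ Ico (0:ℤ) n, ∑ t ∈ Ico (0:ℤ) (l*n), ((mstar * u) % n) := by
    rw [show (l*n^2 : ℤ) = n*(l*n) by ring,
      sum_reindex (fun k => ((mstar * k) % n)) (l*n) n hn, Finset.sum_comm]
    exact Finset.sum_congr rfl fun u _ => Finset.sum_congr rfl fun t _ => by
      rw [rho_shift]
  have hB2 : ∑ k ∈ Ico (0:ℤ) (l*n^2), ((mstar * k) % n)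
      = (l*n) * (∑ u ∈ Ico (0:ℤ) n, (mstar * u) % n) := by
    rw [hB1, Finset.mul_sum]
    refine Finset.sum_congr rfl fun u _ => ?_
    rw [Finset.sum_const, Int.card_Ico, nsmul_eq_mul, Int.toNat_of_nonneg (by omega)]
    ring_nf
  have hC2 : ∑ k ∈ Ico (0:ℤ) (l*n^2),
        (if l * n ^ 2 ≤ k + l * n * ((mstar * k) % n) then (l*n^2) else 0)
      = (l*n^2)*l * (∑ u ∈ Ico (0:ℤ) n, (mstar * u) % n) := by
    have hC1 : ∑ k ∈ Ico (0:ℤ) (l*n^2),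
          (if l * n ^ 2 ≤ k + l * n * ((mstar * k) % n) then (l*n^2) else 0)
        = ∑ u ∈ Ico (0:ℤ) n, ∑ t ∈ Ico (0:ℤ) (l*n),
          (if l * n ^ 2 ≤ n*t+u + l * n * ((mstar * u) % n) then (l*n^2) else 0) := by
      rw [sum_reindex' (fun k => if l * n ^ 2 ≤ k + l * n * ((mstar * k) % n) then (l*n^2) else 0)
          (l*n) n (l*n^2) hn (by ring), Finset.sum_comm]
      exact Finset.sum_congr rfl fun u _ => Finset.sum_congr rfl fun t _ => by
        rw [rho_shift]
    rw [hC1, Finset.mul_sum]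
    refine Finset.sum_congr rfl fun u hu => ?_
    simp only [Finset.mem_Ico] at hu
    obtain ⟨hρ0, hρn⟩ := rho_bounds n mstar hn u
    obtain ⟨hlρ0, hlρle⟩ := lrho_le n l mstar hn hl u
    rw [← Finset.sum_filter, filter_eq n l u ((mstar * u) % n) hn hl hu.1 hu.2 hρ0 hρn,
      Finset.sum_const, Int.card_Ico, nsmul_eq_mul, Int.toNat_of_nonneg (by linarith)]
    ring_nf
  have hP := sumP n m mstar hn hinv
  linear_combination hA + (l*n)*2*hB2 - 2*hC2 + ((l*n)^2 - (l*n^2)*l) * hP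

end Main

theorem power_case_formula (n l : ℤ) (hn : 0 < n) (hl : 0 < l) (m mstar : ℤ)
    (hm : Int.gcd m n = 1) (hinv : m * mstar ≡ 1 [ZMOD n]) :
    Sded (1 + l * n * mstar) (l * n ^ 2) =
      2 / ((l : ℝ) * (n : ℝ) ^ 2) + (l : ℝ) - 3 := by
  have hc : (0:ℤ) < l * n ^ 2 := by positivity
  have hcR : ((l * n ^ 2 : ℤ):ℝ) > 0 := by exact_mod_cast hc
  have hcR' : ((l * n ^ 2 : ℤ):ℝ) ≠ 0 := hcR.ne'
  -- coprimality
  have h2 : IsCoprime (1 + l*n*mstar) n := by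
    have h := (isCoprime_one_left (x := n)).add_mul_left_left (l*mstar)
    rwa [show 1 + n*(l*mstar) = 1 + l*n*mstar by ring] at h
  have h3 : IsCoprime (1 + l*n*mstar) l := by
    have h := (isCoprime_one_left (x := l)).add_mul_left_left (n*mstar)
    rwa [show 1 + l*(n*mstar) = 1 + l*n*mstar by ring] at h
  have hcop : IsCoprime (1 + l*n*mstar) (l*n^2) := by
    have h := h3.mul_right (h2.mul_right h2)
    rwa [show l*(n*n) = l*n^2 by ring] at h
  -- rewrite the dedekind sum
  have hsplit : Icc (1:ℤ) (l*n^2) = insert (l*n^2) (Icc 1 (l*n^2 - 1)) := by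
    ext x; simp; omega
  have hins : Ico (0:ℤ) (l*n^2) = insert 0 (Icc 1 (l*n^2 - 1)) := by
    ext x; simp; omega
  have hterm_top : saw (((l*n^2 : ℤ):ℝ) / ((l*n^2 : ℤ):ℝ)) *
      saw (((1 + l*n*mstar : ℤ):ℝ) * ((l*n^2 : ℤ):ℝ) / ((l*n^2 : ℤ):ℝ)) = 0 := by
    rw [div_self hcR', saw, if_pos ⟨1, by norm_num⟩, zero_mul]
  have hG : ∀ k ∈ Icc (1:ℤ) (l*n^2 - 1),
      saw ((k:ℝ) / ((l*n^2 : ℤ):ℝ)) * saw (((1 + l*n*mstar : ℤ):ℝ) * (k:ℝ) / ((l*n^2 : ℤ):ℝ))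
        = ((k:ℝ)/((l*n^2 : ℤ):ℝ) - 1/2) *
          (((((1 + l*n*mstar) * k) % (l*n^2) : ℤ):ℝ)/((l*n^2 : ℤ):ℝ) - 1/2) := by
    intro k hk
    simp only [Finset.mem_Icc] at hk
    have hnd1 : ¬ (l*n^2) ∣ k := by
      intro hdvd
      have := Int.le_of_dvd (by omega) hdvd
      omega
    have hnd2 : ¬ (l*n^2) ∣ (1 + l*n*mstar) * k := by
      intro hdvd
      exact hnd1 (hcop.symm.dvd_of_dvd_mul_left hdvd)
    have e1 : ((1 + l*n*mstar : ℤ):ℝ) * (k:ℝ) / ((l*n^2 : ℤ):ℝ)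
        = (((1 + l*n*mstar) * k : ℤ):ℝ) / ((l*n^2 : ℤ):ℝ) := by push_cast; ring
    rw [e1, saw_int_div _ _ hc, saw_int_div _ _ hc, if_neg hnd1, if_neg hnd2,
      Int.emod_eq_of_lt (by omega) (by omega)]
  have hded : ded (1 + l*n*mstar) (l*n^2) =
      (∑ k ∈ Ico (0:ℤ) (l*n^2),
        ((k:ℝ)/((l*n^2 : ℤ):ℝ) - 1/2) *
          (((((1 + l*n*mstar) * k) % (l*n^2) : ℤ):ℝ)/((l*n^2 : ℤ):ℝ) - 1/2)) - 1/4 := by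
    rw [ded, hsplit, Finset.sum_insert (by simp), hterm_top, zero_add,
      Finset.sum_congr rfl hG, hins, Finset.sum_insert (by simp)]
    have h0 : ((0:ℤ):ℝ)/((l*n^2 : ℤ):ℝ) = 0 := by norm_num
    simp only [Int.cast_zero, zero_div, zero_mul, Int.mul_zero, Int.zero_emod]
    ring
  -- expand the product and split sums
  have hexp : ∀ k ∈ Ico (0:ℤ) (l*n^2),
      ((k:ℝ)/((l*n^2 : ℤ):ℝ) - 1/2) *
          (((((1 + l*n*mstar) * k) % (l*n^2) : ℤ):ℝ)/((l*n^2 : ℤ):ℝ) - 1/2)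
        = ((k * (((1 + l*n*mstar) * k) % (l*n^2)) : ℤ):ℝ)/((l*n^2 : ℤ):ℝ)^2
          - ((((1 + l*n*mstar) * k) % (l*n^2) : ℤ):ℝ)/(2*((l*n^2 : ℤ):ℝ))
          - ((k:ℤ):ℝ)/(2*((l*n^2 : ℤ):ℝ)) + 1/4 := by
    intro k _
    push_cast
    field_simp
    ring
  have hT1 := sum_kg n l m mstar hn hl hinv
  have hT2 := sum_g n l m mstar hn hl hinv
  have hT3 := sum_Ico_id (l*n^2) hc.le
  have hT1R : 12 * ((∑ k ∈ Ico (0:ℤ) (l*n^2), k * (((1 + l*n*mstar) * k) % (l*n^2)) : ℤ):ℝ) =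
      3*((l*n^2 : ℤ):ℝ)^3 - 6*((l*n^2 : ℤ):ℝ)^2 + (l:ℝ)*((l*n^2 : ℤ):ℝ)^2 + 2*((l*n^2 : ℤ):ℝ) := by
    exact_mod_cast congrArg (Int.cast : ℤ → ℝ) hT1
  have hT2R : 2 * ((∑ k ∈ Ico (0:ℤ) (l*n^2), (((1 + l*n*mstar) * k) % (l*n^2)) : ℤ):ℝ) =
      ((l*n^2 : ℤ):ℝ) * (((l*n^2 : ℤ):ℝ) - 1) := by
    exact_mod_cast congrArg (Int.cast : ℤ → ℝ) hT2
  have hT3R : 2 * ((∑ k ∈ Ico (0:ℤ) (l*n^2), k : ℤ):ℝ) =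
      ((l*n^2 : ℤ):ℝ) * (((l*n^2 : ℤ):ℝ) - 1) := by
    exact_mod_cast congrArg (Int.cast : ℤ → ℝ) hT3
  have hcard : ((Ico (0:ℤ) (l*n^2)).card : ℝ) = ((l*n^2 : ℤ):ℝ) := by
    rw [Int.card_Ico, sub_zero]
    have h := Int.toNat_of_nonneg hc.le
    exact_mod_cast congrArg (Int.cast : ℤ → ℝ) h
  have hsum : ∑ k ∈ Ico (0:ℤ) (l*n^2),
      ((k:ℝ)/((l*n^2 : ℤ):ℝ) - 1/2) *
        (((((1 + l*n*mstar) * k) % (l*n^2) : ℤ):ℝ)/((l*n^2 : ℤ):ℝ) - 1/2)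
      = ((∑ k ∈ Ico (0:ℤ) (l*n^2), k * (((1 + l*n*mstar) * k) % (l*n^2)) : ℤ):ℝ)/((l*n^2 : ℤ):ℝ)^2
        - ((∑ k ∈ Ico (0:ℤ) (l*n^2), (((1 + l*n*mstar) * k) % (l*n^2)) : ℤ):ℝ)/(2*((l*n^2 : ℤ):ℝ))
        - ((∑ k ∈ Ico (0:ℤ) (l*n^2), k : ℤ):ℝ)/(2*((l*n^2 : ℤ):ℝ))
        + ((l*n^2 : ℤ):ℝ)/4 := by
    rw [Finset.sum_congr rfl hexp, Finset.sum_add_distrib, Finset.sum_sub_distrib,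
      Finset.sum_sub_distrib, ← Finset.sum_div, ← Finset.sum_div, ← Finset.sum_div,
      Finset.sum_const, nsmul_eq_mul, hcard]
    push_cast
    ring
  rw [Sded, hded, hsum]
  have hcast : ((l*n^2 : ℤ):ℝ) = (l:ℝ) * (n:ℝ)^2 := by push_cast; ring
  rw [hcast] at hT1R hT2R hT3R ⊢
  have hlnR : (l:ℝ) * (n:ℝ)^2 ≠ 0 := by rw [← hcast]; exact hcR'
  push_cast at hT1R hT2R hT3R ⊢
  field_simp
  linear_combination 8 * hT1R - (24*((l:ℝ)*(n:ℝ)^2)) * hT2R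
    - (24*((l:ℝ)*(n:ℝ)^2)) * hT3R
end

section
/- For any prime p ≥ 5, there exist integers m₁, m₂ with 0 ≤ m₁, m₂ < p², gcd(m₁, p) = gcd(m₂, p) = 1, m₁ ≢ m₂ (mod p²), m₁·m₂ ≢ 1 (mod p²), and S(m₁, p²) = S(m₂, p²). -/
open scoped Classical
open Finset

lemma floor_int_div (j n : ℤ) (hn : 0 < n) : ⌊(j:ℝ)/(n:ℝ)⌋ = j / n := by
  have hn' : (0:ℝ) < (n:ℝ) := by exact_mod_cast hn
  rw [Int.floor_eq_iff, le_div_iff₀ hn', div_lt_iff₀ hn']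
  constructor
  · exact_mod_cast Int.ediv_mul_le j (ne_of_gt hn)
  · push_cast
    exact_mod_cast Int.lt_ediv_add_one_mul_self j hn

noncomputable def F (p : ℕ) (j : ℤ) : ℝ :=
  if ((p:ℤ)^2 ∣ j) then 0 else ((j % (p:ℤ)^2 : ℤ) : ℝ)/((p:ℤ)^2 : ℝ) - 1/2

lemma saw_eq_F (p : ℕ) (hp : 0 < p) (j : ℤ) :
    saw ((j:ℝ)/(((p:ℤ)^2 : ℤ) : ℝ)) = F p j := by
  have hn : (0:ℤ) < (p:ℤ)^2 := by positivity
  have hne : (((p:ℤ)^2 : ℤ) : ℝ) ≠ 0 := by positivity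
  have hdvd : (∃ z : ℤ, (z : ℝ) = (j:ℝ)/(((p:ℤ)^2 : ℤ):ℝ)) ↔ ((p:ℤ)^2 ∣ j) := by
    constructor
    · rintro ⟨z, hz⟩
      have h2 : (z:ℝ) * (((p:ℤ)^2 : ℤ):ℝ) = (j:ℝ) := (eq_div_iff hne).mp hz
      refine ⟨z, ?_⟩
      have : ((((p:ℤ)^2) * z : ℤ) : ℝ) = (j:ℝ) := by push_cast at h2 ⊢; linarith
      exact_mod_cast this.symm
    · rintro ⟨z, rfl⟩
      exact ⟨z, by push_cast; field_simp⟩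
  rw [saw, F, if_congr hdvd rfl rfl]
  by_cases h : (p:ℤ)^2 ∣ j
  · simp [h]
  · rw [if_neg h, if_neg h, floor_int_div j _ hn, Int.emod_def]
    push_cast
    field_simp

lemma F_period (p : ℕ) (j t : ℤ) : F p (j + (p:ℤ)^2 * t) = F p j := by
  have h : ((p:ℤ)^2 ∣ j + (p:ℤ)^2*t) ↔ ((p:ℤ)^2 ∣ j) := by
    constructor
    · intro h; have := h.sub (Dvd.intro t rfl); simpa using this
    · intro h; exact h.add (Dvd.intro t rfl)
  rw [F, F, Int.add_mul_emod_self_left, if_congr h rfl rfl]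

lemma F_val (p : ℕ) (x : ℤ) (h0 : 0 < x) (h1 : x < (p:ℤ)^2) :
    F p x = (x:ℝ)/(p:ℝ)^2 - 1/2 := by
  have hnd : ¬ ((p:ℤ)^2 ∣ x) := fun h => by have := Int.le_of_dvd h0 h; omega
  rw [F, if_neg hnd, Int.emod_eq_of_lt h0.le h1]
  push_cast
  ring_nf

lemma ded_eq (p : ℕ) (hp : 0 < p) (m : ℤ) :
    ded m ((p:ℤ)^2) = ∑ j ∈ Finset.Ico (0:ℤ) ((p:ℤ)^2), F p j * F p (m*j) := by
  have hn : (0:ℤ) < (p:ℤ)^2 := by positivity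
  have h1 : ded m ((p:ℤ)^2) = ∑ j ∈ Finset.Icc (1:ℤ) ((p:ℤ)^2), F p j * F p (m*j) := by
    unfold ded
    refine Finset.sum_congr rfl (fun j _ => ?_)
    rw [show (m:ℝ)*(j:ℝ) = ((m*j : ℤ):ℝ) by push_cast; ring]
    rw [show ((((p:ℤ)^2 : ℤ)):ℝ) = (((p:ℤ)^2 : ℤ):ℝ) from rfl]
    rw [saw_eq_F p hp j, saw_eq_F p hp (m*j)]
  rw [h1]
  have e1 : Finset.Icc (1:ℤ) ((p:ℤ)^2) = insert ((p:ℤ)^2) (Finset.Ico (1:ℤ) ((p:ℤ)^2)) := by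
    ext x; simp [Finset.mem_Icc, Finset.mem_Ico]; omega
  have e2 : Finset.Ico (0:ℤ) ((p:ℤ)^2) = insert (0:ℤ) (Finset.Ico (1:ℤ) ((p:ℤ)^2)) := by
    ext x; simp [Finset.mem_Ico]; omega
  have hF0 : F p (0:ℤ) = 0 := by rw [F, if_pos (dvd_zero _)]
  have hFn : F p ((p:ℤ)^2) = 0 := by rw [F, if_pos dvd_rfl]
  rw [e1, e2, Finset.sum_insert (by simp), Finset.sum_insert (by simp)]
  rw [hF0, hFn]
  ring

lemma sum_Ico_sq_s15 (p : ℕ) (hp : 0 < p) (f : ℤ → ℝ) :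
    ∑ j ∈ Finset.Ico (0:ℤ) ((p:ℤ)^2), f j
      = ∑ a ∈ Finset.Ico (0:ℤ) (p:ℤ), ∑ b ∈ Finset.Ico (0:ℤ) (p:ℤ), f (a + (p:ℤ)*b) := by
  have hpz : (0:ℤ) < (p:ℤ) := by exact_mod_cast hp
  rw [← Finset.sum_product']
  refine Finset.sum_nbij' (fun j => (j % (p:ℤ), j / (p:ℤ)))
    (fun ab => ab.1 + (p:ℤ)*ab.2) ?_ ?_ ?_ ?_ ?_
  · intro j hj
    simp only [Finset.mem_Ico, Finset.mem_product] at hj ⊢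
    refine ⟨⟨Int.emod_nonneg j hpz.ne', Int.emod_lt_of_pos j hpz⟩,
      ⟨Int.ediv_nonneg hj.1 hpz.le, ?_⟩⟩
    rw [Int.ediv_lt_iff_lt_mul hpz]
    have : (p:ℤ)*(p:ℤ) = (p:ℤ)^2 := by ring
    omega
  · intro ab hab
    simp only [Finset.mem_Ico, Finset.mem_product] at hab ⊢
    constructor
    · nlinarith [hab.1.1, hab.2.1]
    · nlinarith [hab.1.2, hab.2.2, hab.1.1, hab.2.1]
  · intro j hj
    simp only
    exact Int.emod_add_mul_ediv j (p:ℤ)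
  · intro ab hab
    simp only [Finset.mem_Ico, Finset.mem_product] at hab
    have h1 : (ab.1 + (p:ℤ)*ab.2) % (p:ℤ) = ab.1 := by
      rw [Int.add_mul_emod_self_left, Int.emod_eq_of_lt hab.1.1 hab.1.2]
    have h2 : (ab.1 + (p:ℤ)*ab.2) / (p:ℤ) = ab.2 := by
      rw [Int.add_mul_ediv_left _ _ hpz.ne', Int.ediv_eq_zero_of_lt hab.1.1 hab.1.2, zero_add]
    exact Prod.ext h1 h2
  · intro j hj
    simp only
    rw [Int.emod_add_mul_ediv j (p:ℤ)]

lemma sum_shift {M : Type*} [AddCommMonoid M] (p : ℕ) (hp : 0 < p) (c : ℤ)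
    (h : ℤ → M) :
    ∑ b ∈ Finset.Ico (0:ℤ) (p:ℤ), h ((b + c) % (p:ℤ))
      = ∑ b ∈ Finset.Ico (0:ℤ) (p:ℤ), h b := by
  have hpz : (0:ℤ) < (p:ℤ) := by exact_mod_cast hp
  refine Finset.sum_nbij' (fun b => (b + c) % (p:ℤ)) (fun b => (b - c) % (p:ℤ)) ?_ ?_ ?_ ?_ ?_
  · intro b _
    simp only [Finset.mem_Ico]
    exact ⟨Int.emod_nonneg _ hpz.ne', Int.emod_lt_of_pos _ hpz⟩
  · intro b _
    simp only [Finset.mem_Ico]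
    exact ⟨Int.emod_nonneg _ hpz.ne', Int.emod_lt_of_pos _ hpz⟩
  · intro b hb
    simp only [Finset.mem_Ico] at hb
    rw [Int.sub_emod, Int.emod_emod_of_dvd _ dvd_rfl, ← Int.sub_emod, add_sub_cancel_right,
      Int.emod_eq_of_lt hb.1 hb.2]
  · intro b hb
    simp only [Finset.mem_Ico] at hb
    rw [Int.add_emod, Int.emod_emod_of_dvd _ dvd_rfl, ← Int.add_emod, sub_add_cancel,
      Int.emod_eq_of_lt hb.1 hb.2]
  · intro b _
    rfl

lemma mul_map_mem (p : ℕ) (hp : p.Prime) (k : ℤ) (hk : ¬ ((p:ℤ) ∣ k)) (a : ℤ)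
    (ha : a ∈ Finset.Ico (1:ℤ) (p:ℤ)) : (k * a) % (p:ℤ) ∈ Finset.Ico (1:ℤ) (p:ℤ) := by
  have hpz : (0:ℤ) < (p:ℤ) := by exact_mod_cast hp.pos
  simp only [Finset.mem_Ico] at ha ⊢
  have hprime : Prime ((p:ℤ)) := Nat.prime_iff_prime_int.mp hp
  have hne : (k * a) % (p:ℤ) ≠ 0 := by
    intro h
    have hdvd : (p:ℤ) ∣ k * a := Int.dvd_of_emod_eq_zero h
    rcases hprime.dvd_mul.mp hdvd with h' | h'
    · exact hk h'
    · have := Int.le_of_dvd (by omega) h'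
      omega
  have := Int.emod_nonneg (k*a) hpz.ne'
  have := Int.emod_lt_of_pos (k*a) hpz
  omega

lemma sum_mul_shift (p : ℕ) (hp : p.Prime) (k : ℤ) (hk : ¬ ((p:ℤ) ∣ k)) (h : ℤ → ℤ) :
    ∑ a ∈ Finset.Ico (1:ℤ) (p:ℤ), h ((k * a) % (p:ℤ))
      = ∑ a ∈ Finset.Ico (1:ℤ) (p:ℤ), h a := by
  have hpz : (0:ℤ) < (p:ℤ) := by exact_mod_cast hp.pos
  have hprime : Prime ((p:ℤ)) := Nat.prime_iff_prime_int.mp hp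
  have hcop : IsCoprime ((p:ℤ)) k := hprime.coprime_iff_not_dvd.mpr hk
  obtain ⟨u, v, huv⟩ := hcop
  -- u * p + v * k = 1
  have hv : ¬ ((p:ℤ) ∣ v) := by
    intro hdvd
    rcases hdvd with ⟨w, rfl⟩
    have : (p:ℤ) ∣ 1 := ⟨u + w*k, by linarith [huv]⟩
    have := Int.le_of_dvd one_pos this
    have := hp.two_le
    omega
  refine Finset.sum_nbij' (fun a => (k * a) % (p:ℤ)) (fun a => (v * a) % (p:ℤ))
    (mul_map_mem p hp k hk) (mul_map_mem p hp v hv) ?_ ?_ ?_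
  · intro a ha
    simp only [Finset.mem_Ico] at ha
    rw [Int.mul_emod, Int.emod_emod_of_dvd _ dvd_rfl, ← Int.mul_emod]
    have hmod : (v * (k * a)) % (p:ℤ) = a % (p:ℤ) := by
      exact Int.ModEq.symm (Int.modEq_iff_dvd.mpr ⟨-(u*a), by linear_combination a * huv⟩)
    rw [hmod, Int.emod_eq_of_lt (by omega) ha.2]
  · intro a ha
    simp only [Finset.mem_Ico] at ha
    rw [Int.mul_emod, Int.emod_emod_of_dvd _ dvd_rfl, ← Int.mul_emod]
    have hmod : (k * (v * a)) % (p:ℤ) = a % (p:ℤ) := by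
      exact Int.ModEq.symm (Int.modEq_iff_dvd.mpr ⟨-(u*a), by linear_combination a * huv⟩)
    rw [hmod, Int.emod_eq_of_lt (by omega) ha.2]
  · intro a _
    rfl

noncomputable def Xa (p : ℕ) (a : ℤ) : ℝ :=
  2 * ((a:ℝ)/(p:ℝ)^2 - 1/2) * (∑ b ∈ Finset.Ico (0:ℤ) (p:ℤ), (b:ℝ)/(p:ℝ))
    + (p:ℝ) * ((a:ℝ)/(p:ℝ)^2 - 1/2)^2

lemma inner_decomp (p : ℕ) (hp : 0 < p) (a c : ℤ)
    (ha : a ∈ Finset.Ico (1:ℤ) (p:ℤ)) (hc : c ∈ Finset.Ico (0:ℤ) (p:ℤ)) :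
    ∑ b ∈ Finset.Ico (0:ℤ) (p:ℤ), F p (a + (p:ℤ)*b) * F p (a + (p:ℤ)*((b+c)%(p:ℤ)))
      = Xa p a + ((∑ b ∈ Finset.Ico (0:ℤ) (p:ℤ), b * ((b+c)%(p:ℤ)) : ℤ) : ℝ)/(p:ℝ)^2 := by
  have hpz : (0:ℤ) < (p:ℤ) := by exact_mod_cast hp
  have hpr : (0:ℝ) < (p:ℝ) := by exact_mod_cast hp
  simp only [Finset.mem_Ico] at ha hc
  set e : ℝ := (a:ℝ)/(p:ℝ)^2 - 1/2 with he
  have hp2 : (p:ℤ) * ((p:ℤ) - 1) = (p:ℤ)^2 - (p:ℤ) := by ring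
  have step : ∀ b ∈ Finset.Ico (0:ℤ) (p:ℤ),
      F p (a + (p:ℤ)*b) * F p (a + (p:ℤ)*((b+c)%(p:ℤ)))
        = ((b * ((b+c)%(p:ℤ)) : ℤ) : ℝ)/(p:ℝ)^2
          + ((b:ℝ)/(p:ℝ)) * e + ((((b+c)%(p:ℤ) : ℤ)):ℝ)/(p:ℝ) * e + e^2 := by
    intro b hb
    simp only [Finset.mem_Ico] at hb
    have hs0 : 0 ≤ (b+c) % (p:ℤ) := Int.emod_nonneg _ hpz.ne'
    have hs1 : (b+c) % (p:ℤ) < (p:ℤ) := Int.emod_lt_of_pos _ hpz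
    have hb' : (p:ℤ)*b ≤ (p:ℤ)*((p:ℤ)-1) := by
      apply mul_le_mul_of_nonneg_left (by omega) hpz.le
    have hs' : (p:ℤ)*((b+c)%(p:ℤ)) ≤ (p:ℤ)*((p:ℤ)-1) := by
      apply mul_le_mul_of_nonneg_left (by omega) hpz.le
    have hbnn : 0 ≤ (p:ℤ)*b := mul_nonneg hpz.le hb.1
    have hsnn : 0 ≤ (p:ℤ)*((b+c)%(p:ℤ)) := by
      apply mul_nonneg hpz.le hs0
    rw [F_val p _ (by omega) (by omega), F_val p _ (by omega) (by omega)]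
    rw [he]
    push_cast
    field_simp
    ring
  rw [Finset.sum_congr rfl step]
  rw [Finset.sum_add_distrib, Finset.sum_add_distrib, Finset.sum_add_distrib]
  rw [sum_shift p hp c (fun t : ℤ => ((t:ℝ))/(p:ℝ) * e)]
  rw [Finset.sum_const, Int.card_Ico, ← Finset.sum_div, ← Int.cast_sum]
  rw [Xa]
  have hcard : (((p:ℤ) - 0).toNat : ℝ) = (p:ℝ) := by simp
  rw [nsmul_eq_mul, hcard, ← Finset.sum_mul, ← he]
  ring

lemma ded_param (p : ℕ) (hp : p.Prime) (k : ℤ) (hk : ¬ ((p:ℤ) ∣ k)) :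
    ded (k*(p:ℤ)+1) ((p:ℤ)^2)
      = (∑ b ∈ Finset.Ico (0:ℤ) (p:ℤ), F p ((p:ℤ)*b) * F p ((p:ℤ)*b))
        + ∑ a ∈ Finset.Ico (1:ℤ) (p:ℤ), Xa p a
        + ((∑ c ∈ Finset.Ico (1:ℤ) (p:ℤ), ∑ b ∈ Finset.Ico (0:ℤ) (p:ℤ),
            b * ((b+c)%(p:ℤ)) : ℤ) : ℝ)/(p:ℝ)^2 := by
  have hp0 : 0 < p := hp.pos
  have hpz : (0:ℤ) < (p:ℤ) := by exact_mod_cast hp0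
  rw [ded_eq p hp0, sum_Ico_sq_s15 p hp0]
  have step1 : ∀ a ∈ Finset.Ico (0:ℤ) (p:ℤ), ∀ b ∈ Finset.Ico (0:ℤ) (p:ℤ),
      F p (a + (p:ℤ)*b) * F p ((k*(p:ℤ)+1) * (a + (p:ℤ)*b))
        = F p (a + (p:ℤ)*b) * F p (a + (p:ℤ)*((b + (k*a)%(p:ℤ)) % (p:ℤ))) := by
    intro a ha b hb
    simp only [Finset.mem_Ico] at ha hb
    have hdecomp : (k*(p:ℤ)+1) * (a + (p:ℤ)*b)
        = (a + (p:ℤ)*((b + k*a) % (p:ℤ))) + (p:ℤ)^2 * (k*b + (b + k*a)/ (p:ℤ)) := by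
      rw [Int.emod_def]
      ring
    have hmod : (b + k*a) % (p:ℤ) = (b + (k*a)%(p:ℤ)) % (p:ℤ) :=
      (Int.add_emod_emod b (k*a) (p:ℤ)).symm
    rw [hdecomp, F_period, hmod]
  rw [Finset.sum_congr rfl (fun a ha => Finset.sum_congr rfl (step1 a ha))]
  have hsplit : Finset.Ico (0:ℤ) (p:ℤ) = insert (0:ℤ) (Finset.Ico (1:ℤ) (p:ℤ)) := by
    ext x; simp [Finset.mem_Ico]; omega
  have hins := Finset.sum_insert (s := Finset.Ico (1:ℤ) (p:ℤ)) (a := (0:ℤ))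
    (f := fun a => ∑ b ∈ Finset.Ico (0:ℤ) (p:ℤ),
      F p (a + (p:ℤ)*b) * F p (a + (p:ℤ)*((b + (k*a)%(p:ℤ)) % (p:ℤ)))) (by simp)
  rw [← hsplit] at hins
  rw [hins]
  beta_reduce
  have hzero : ∑ b ∈ Finset.Ico (0:ℤ) (p:ℤ),
      F p ((0:ℤ) + (p:ℤ)*b) * F p ((0:ℤ) + (p:ℤ)*((b + (k*(0:ℤ))%(p:ℤ)) % (p:ℤ)))
        = ∑ b ∈ Finset.Ico (0:ℤ) (p:ℤ), F p ((p:ℤ)*b) * F p ((p:ℤ)*b) := by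
    refine Finset.sum_congr rfl (fun b hb => ?_)
    simp only [Finset.mem_Ico] at hb
    simp only [mul_zero, Int.zero_emod, add_zero, zero_add, Int.emod_eq_of_lt hb.1 hb.2]
  rw [hzero]
  have hmain : ∀ a ∈ Finset.Ico (1:ℤ) (p:ℤ),
      ∑ b ∈ Finset.Ico (0:ℤ) (p:ℤ),
        F p (a + (p:ℤ)*b) * F p (a + (p:ℤ)*((b + (k*a)%(p:ℤ)) % (p:ℤ)))
        = Xa p a + ((∑ b ∈ Finset.Ico (0:ℤ) (p:ℤ),
            b * ((b+(k*a)%(p:ℤ))%(p:ℤ)) : ℤ) : ℝ)/(p:ℝ)^2 := by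
    intro a ha
    exact inner_decomp p hp0 a ((k*a)%(p:ℤ)) ha
      (by simp only [Finset.mem_Ico]
          exact ⟨Int.emod_nonneg _ hpz.ne', Int.emod_lt_of_pos _ hpz⟩)
  rw [Finset.sum_congr rfl hmain, Finset.sum_add_distrib]
  have hbij : ∑ a ∈ Finset.Ico (1:ℤ) (p:ℤ),
      ((∑ b ∈ Finset.Ico (0:ℤ) (p:ℤ), b * ((b+(k*a)%(p:ℤ))%(p:ℤ)) : ℤ) : ℝ)/(p:ℝ)^2
      = ((∑ c ∈ Finset.Ico (1:ℤ) (p:ℤ), ∑ b ∈ Finset.Ico (0:ℤ) (p:ℤ),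
            b * ((b+c)%(p:ℤ)) : ℤ) : ℝ)/(p:ℝ)^2 := by
    rw [← Finset.sum_div, ← Int.cast_sum]
    rw [sum_mul_shift p hp k hk (fun c => ∑ b ∈ Finset.Ico (0:ℤ) (p:ℤ), b * ((b+c)%(p:ℤ)))]
  rw [hbij]
  ring

lemma ded_key (p : ℕ) (hp : p.Prime) (h5 : 5 ≤ p) :
    ded ((p:ℤ)+1) ((p:ℤ)^2) = ded (2*(p:ℤ)+1) ((p:ℤ)^2) := by
  have hp5 : (5:ℤ) ≤ (p:ℤ) := by exact_mod_cast h5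
  have h1 : ¬ ((p:ℤ) ∣ 1) := by
    intro h; have := Int.le_of_dvd one_pos h; omega
  have h2 : ¬ ((p:ℤ) ∣ 2) := by
    intro h; have := Int.le_of_dvd two_pos h; omega
  have e1 := ded_param p hp 1 h1
  have e2 := ded_param p hp 2 h2
  rw [show (1:ℤ)*(p:ℤ)+1 = (p:ℤ)+1 by ring] at e1
  rw [e1, e2]

theorem nonobvious_equality_p_sq (p : ℕ) (hp : p.Prime) (hge : 5 ≤ p) :
    ∃ m₁ m₂ : ℤ, 0 ≤ m₁ ∧ m₁ < (p : ℤ) ^ 2 ∧ 0 ≤ m₂ ∧ m₂ < (p : ℤ) ^ 2 ∧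
      Int.gcd m₁ (p : ℤ) = 1 ∧ Int.gcd m₂ (p : ℤ) = 1 ∧
      ¬ m₁ ≡ m₂ [ZMOD (p : ℤ) ^ 2] ∧ ¬ m₁ * m₂ ≡ 1 [ZMOD (p : ℤ) ^ 2] ∧
      Sded m₁ ((p : ℤ) ^ 2) = Sded m₂ ((p : ℤ) ^ 2) := by
  have hp5 : (5:ℤ) ≤ (p:ℤ) := by exact_mod_cast hge
  refine ⟨(p:ℤ)+1, 2*(p:ℤ)+1, by omega, by nlinarith, by omega, by nlinarith, ?_, ?_, ?_, ?_, ?_⟩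
  · exact Int.isCoprime_iff_gcd_eq_one.mp ⟨1, -1, by ring⟩
  · exact Int.isCoprime_iff_gcd_eq_one.mp ⟨1, -2, by ring⟩
  · intro h
    have hd := Int.ModEq.dvd h
    have hd' : (p:ℤ)^2 ∣ (p:ℤ) := by
      have : (2*(p:ℤ)+1) - ((p:ℤ)+1) = (p:ℤ) := by ring
      rwa [this] at hd
    have := Int.le_of_dvd (by omega) hd'
    nlinarith
  · intro h
    have hd := Int.ModEq.dvd h
    have hd' : (p:ℤ)^2 ∣ 3*(p:ℤ) := by
      have h3 : (1:ℤ) - ((p:ℤ)+1)*(2*(p:ℤ)+1) = -(2*(p:ℤ)^2 + 3*(p:ℤ)) := by ring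
      rw [h3] at hd
      have hd2 : (p:ℤ)^2 ∣ 2*(p:ℤ)^2 + 3*(p:ℤ) := dvd_neg.mp hd
      have hsub := hd2.sub (⟨2, by ring⟩ : (p:ℤ)^2 ∣ 2*(p:ℤ)^2)
      rwa [show 2*(p:ℤ)^2 + 3*(p:ℤ) - 2*(p:ℤ)^2 = 3*(p:ℤ) by ring] at hsub
    have hp3 : (p:ℤ) ∣ 3 := by
      have hrw : (p:ℤ)^2 = (p:ℤ)*(p:ℤ) := by ring
      have hrw2 : 3*(p:ℤ) = (p:ℤ)*3 := by ring
      rw [hrw, hrw2] at hd'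
      exact (mul_dvd_mul_iff_left (by omega : (p:ℤ) ≠ 0)).mp hd'
    have := Int.le_of_dvd (by omega) hp3
    omega
  · unfold Sded
    rw [ded_key p hp hge]
end

section
/- Let n be a positive integer, m coprime to n with m* its inverse mod n, and t a positive integer with t ≡ m − m* (mod n). Then for every integer l ≥ 1, setting t₁ = t + l·n, we have S(1 + m·t₁, n·t₁) = 2/(n·t₁) + t₁/n − 3. -/
open scoped Classical
open Finset

lemma saw_intCast (z : ℤ) : saw (z : ℝ) = 0 := by
  unfold saw
  rw [if_pos ⟨z, rfl⟩]

lemma saw_div_eq (a b : ℤ) (hb : 0 < b) (hnd : ¬ b ∣ a) :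
    saw ((a : ℝ) / (b : ℝ)) = ((a % b : ℤ) : ℝ) / (b : ℝ) - 1/2 := by
  have hb0 : (b : ℝ) ≠ 0 := by exact_mod_cast hb.ne'
  have hfl : ⌊(a : ℝ) / (b : ℝ)⌋ = a / b := by
    have hdm := Int.mul_ediv_add_emod a b
    have h0 : 0 ≤ a % b := Int.emod_nonneg a hb.ne'
    have h1 : a % b < b := Int.emod_lt_of_pos a hb
    have hbR : (0:ℝ) < (b:ℝ) := by exact_mod_cast hb
    rw [Int.floor_eq_iff]
    constructor
    · rw [le_div_iff₀ hbR]
      have h2 : (a/b) * b ≤ a := by nlinarith [hdm]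
      exact_mod_cast h2
    · rw [div_lt_iff₀ hbR]
      have h2 : a < (a/b + 1) * b := by nlinarith [hdm]
      exact_mod_cast h2
  unfold saw
  rw [if_neg, hfl]
  · have hdm := Int.mul_ediv_add_emod a b
    have hdmR : (b:ℝ) * ((a/b : ℤ):ℝ) + ((a % b : ℤ):ℝ) = (a:ℝ) := by exact_mod_cast hdm
    field_simp
    push_cast at hdmR ⊢
    linarith [hdmR]
  · rintro ⟨z, hz⟩
    apply hnd
    refine ⟨z, ?_⟩
    have : (z : ℝ) * b = a := by
      field_simp at hz
      linarith
    have : a = z * b := by exact_mod_cast this.symm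
    rw [this]; ring

lemma two_mul_sum_range (M : ℕ) : 2 * ∑ i ∈ range M, (i : ℤ) = M * (M - 1) := by
  induction M with
  | zero => simp
  | succ p ih =>
    rw [Finset.sum_range_succ, mul_add, ih]
    push_cast
    ring

lemma six_mul_sum_range_sq (M : ℕ) :
    6 * ∑ i ∈ range M, (i : ℤ)^2 = M * (M - 1) * (2*M - 1) := by
  induction M with
  | zero => simp
  | succ p ih =>
    rw [Finset.sum_range_succ, mul_add, ih]
    push_cast
    ring

lemma qsum (M : ℕ) (a b c : ℤ) :
    ∑ i ∈ range M, (a + b * (i:ℤ) + c * (i:ℤ)^2)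
      = a * M + b * (∑ i ∈ range M, (i:ℤ)) + c * (∑ i ∈ range M, (i:ℤ)^2) := by
  rw [Finset.sum_add_distrib, Finset.sum_add_distrib, ← Finset.mul_sum, ← Finset.mul_sum,
    Finset.sum_const, nsmul_eq_mul, mul_comm]
  simp

lemma qsumIco (a M : ℕ) (haM : a ≤ M) (p q : ℤ) :
    ∑ i ∈ Finset.Ico a M, (p + q * (i:ℤ))
      = p * ((M : ℤ) - (a : ℤ)) + q * ((∑ i ∈ range M, (i:ℤ)) - ∑ i ∈ range a, (i:ℤ)) := by
  rw [Finset.sum_add_distrib, ← Finset.mul_sum, Finset.sum_const, nsmul_eq_mul,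
    Finset.sum_Ico_eq_sub _ haM, Nat.card_Ico]
  push_cast [Nat.cast_sub haM]
  ring

lemma bij_inner (n m mstar : ℤ) (hn : 0 < n) (hinv : n ∣ m * mstar - 1) (v : ℤ)
    (hv0 : 0 ≤ v) (hv1 : v < n) : (mstar * ((m * v) % n)) % n = v := by
  have h1 : ((m * v) % n) ≡ (m * v) [ZMOD n] := Int.emod_emod_of_dvd _ dvd_rfl
  have h2 : mstar * ((m * v) % n) ≡ mstar * (m * v) [ZMOD n] := h1.mul_left _
  have hm1 : (1 : ℤ) ≡ m * mstar [ZMOD n] := Int.modEq_iff_dvd.mpr hinv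
  have h3 : (m * mstar) * v ≡ 1 * v [ZMOD n] := (hm1.symm).mul_right v
  have h4 : mstar * ((m * v) % n) ≡ v [ZMOD n] := by
    calc mstar * ((m * v) % n) ≡ mstar * (m * v) [ZMOD n] := h2
    _ = (m * mstar) * v := by ring
    _ ≡ 1 * v [ZMOD n] := h3
    _ = v := by ring
  have h5 : mstar * ((m * v) % n) % n = v % n := h4
  rwa [Int.emod_eq_of_lt hv0 hv1] at h5

lemma bij_sum (n m mstar : ℤ) (hn : 0 < n) (hinv : n ∣ m * mstar - 1) (f : ℤ → ℤ) :
    ∑ u ∈ range n.toNat, f ((m * u) % n) = ∑ u ∈ range n.toNat, f (u : ℤ) := by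
  have hN : ((n.toNat : ℤ)) = n := Int.toNat_of_nonneg hn.le
  have hinv' : n ∣ mstar * m - 1 := by rwa [mul_comm] at hinv
  apply Finset.sum_nbij' (i := fun u : ℕ => ((m * u) % n).toNat)
    (j := fun v : ℕ => ((mstar * v) % n).toNat)
  · intro u _
    have h1 := Int.emod_lt_of_pos (m * u) hn
    have h2 := Int.emod_nonneg (m * (u:ℤ)) hn.ne'
    simp only [Finset.mem_range]
    omega
  · intro v _
    have h1 := Int.emod_lt_of_pos (mstar * v) hn
    have h2 := Int.emod_nonneg (mstar * (v:ℤ)) hn.ne'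
    simp only [Finset.mem_range]
    omega
  · intro u hu
    simp only [Finset.mem_range] at hu
    rw [Int.toNat_of_nonneg (Int.emod_nonneg _ hn.ne')]
    rw [bij_inner n m mstar hn hinv u (by positivity) (by omega)]
    simp
  · intro v hv
    simp only [Finset.mem_range] at hv
    rw [Int.toNat_of_nonneg (Int.emod_nonneg _ hn.ne')]
    rw [bij_inner n mstar m hn hinv' v (by positivity) (by omega)]
    simp
  · intro u _
    rw [Int.toNat_of_nonneg (Int.emod_nonneg _ hn.ne')]

lemma reindex (n t1 : ℤ) (hn : 0 < n) (ht : 0 < t1) (g : ℤ → ℤ) :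
    ∑ j ∈ Finset.Icc (0:ℤ) (n*t1 - 1), g j
      = ∑ u ∈ range n.toNat, ∑ i ∈ range t1.toNat, g (n * i + u) := by
  have hprod : ∑ p ∈ (range n.toNat) ×ˢ (range t1.toNat), g (n * p.2 + p.1)
      = ∑ u ∈ range n.toNat, ∑ i ∈ range t1.toNat, g (n * i + u) := Finset.sum_product _ _ _
  rw [← hprod]
  have hkey : ∀ jj : ℤ, 0 ≤ jj → n * ((jj / n).toNat : ℤ) + ((jj % n).toNat : ℤ) = jj := by
    intro jj h0
    rw [Int.toNat_of_nonneg (Int.ediv_nonneg h0 hn.le),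
      Int.toNat_of_nonneg (Int.emod_nonneg _ hn.ne')]
    exact Int.mul_ediv_add_emod jj n
  apply Finset.sum_nbij' (i := fun jj : ℤ => (((jj % n).toNat, (jj / n).toNat) : ℕ × ℕ))
    (j := fun p : ℕ × ℕ => n * p.2 + p.1)
  · intro jj hjj
    simp only [Finset.mem_Icc] at hjj
    have h1 := Int.emod_lt_of_pos jj hn
    have h2 := Int.emod_nonneg jj hn.ne'
    have h3 : jj / n ≤ (n * t1 - 1) / n := Int.ediv_le_ediv hn hjj.2
    have h4 : (n * t1 - 1) / n = t1 - 1 := by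
      have : n * t1 - 1 = (n - 1) + n * (t1 - 1) := by ring
      rw [this, Int.add_mul_ediv_left _ _ hn.ne',
        Int.ediv_eq_zero_of_lt (by omega) (by omega)]
      ring
    have h5 : 0 ≤ jj / n := Int.ediv_nonneg hjj.1 hn.le
    simp only [Finset.mem_product, Finset.mem_range]
    omega
  · intro p hp
    simp only [Finset.mem_product, Finset.mem_range] at hp
    simp only [Finset.mem_Icc]
    have h1 : (p.1 : ℤ) ≤ n - 1 := by omega
    have h2 : (p.2 : ℤ) ≤ t1 - 1 := by omega
    constructor
    · positivity
    · nlinarith [hn.le]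
  · intro jj hjj
    simp only [Finset.mem_Icc] at hjj
    exact hkey jj hjj.1
  · intro p hp
    simp only [Finset.mem_product, Finset.mem_range] at hp
    have h1 : (p.1 : ℤ) < n := by omega
    have heq : n * (p.2 : ℤ) + (p.1 : ℤ) = (p.1 : ℤ) + n * (p.2 : ℤ) := by ring
    have hmod : (n * (p.2 : ℤ) + (p.1 : ℤ)) % n = p.1 := by
      rw [heq, Int.add_mul_emod_self_left, Int.emod_eq_of_lt (by positivity) h1]
    have hdiv : (n * (p.2 : ℤ) + (p.1 : ℤ)) / n = p.2 := by
      rw [heq, Int.add_mul_ediv_left _ _ hn.ne',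
        Int.ediv_eq_zero_of_lt (by positivity) h1]
      ring
    ext
    · simp [hmod]
    · simp [hdiv]
  · intro jj hjj
    simp only [Finset.mem_Icc] at hjj
    rw [hkey jj hjj.1]

lemma ded_inner_sum (n m mstar t1 : ℤ) (u : ℕ) (hn : 0 < n) (hmn : IsCoprime m n)
    (hinv : n ∣ m * mstar - 1) (ht1 : n < t1) (htc : n ∣ t1 - (m - mstar))
    (hu : (u:ℤ) < n) :
    ∑ i ∈ range t1.toNat,
        (2*(n*(i:ℤ)+u) - n*t1) * (2*(((1+m*t1)*(n*(i:ℤ)+u)) % (n*t1)) - n*t1)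
      = 4*n^2*(∑ i ∈ range t1.toNat, (i:ℤ)^2)
        + 4*n*(∑ i ∈ range t1.toNat, (i:ℤ))*(2*(u:ℤ) - n*t1)
        + t1*(2*(u:ℤ) - n*t1)^2 + 2*t1^2*((m*u)%n)*(2*(u:ℤ) - n)
        - 2*t1*(((m*u)%n)*t1 + (u:ℤ) - ((m*((m*u)%n))%n))*(n*t1 + 2*(u:ℤ) - n)
        + 2*t1*(((m*u)%n)*t1 + (u:ℤ) - ((m*((m*u)%n))%n))^2 := by
  have ht : 0 < t1 := hn.trans ht1
  have hk : 0 < n * t1 := mul_pos hn ht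
  have hT : ((t1.toNat : ℤ)) = t1 := Int.toNat_of_nonneg ht.le
  set r : ℤ := (m * u) % n with hrdef
  set w : ℤ := (m * r) % n with hwdef
  have hr0 : 0 ≤ r := Int.emod_nonneg _ hn.ne'
  have hr1 : r < n := Int.emod_lt_of_pos _ hn
  have hw0 : 0 ≤ w := Int.emod_nonneg _ hn.ne'
  have hw1 : w < n := Int.emod_lt_of_pos _ hn
  have hu0 : (0:ℤ) ≤ u := by positivity
  -- divisibility fact
  have hdvd : n ∣ r * t1 + (u:ℤ) - w := by
    have h_r : r ≡ m * u [ZMOD n] := Int.emod_emod_of_dvd _ dvd_rfl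
    have h_w : w ≡ m * (m * u) [ZMOD n] := by
      calc w ≡ m * r [ZMOD n] := Int.emod_emod_of_dvd _ dvd_rfl
      _ ≡ m * (m * u) [ZMOD n] := h_r.mul_left m
    have h_t : t1 ≡ m - mstar [ZMOD n] := (Int.modEq_iff_dvd.mpr htc).symm
    have hmm1 : (1:ℤ) ≡ m * mstar [ZMOD n] := Int.modEq_iff_dvd.mpr hinv
    have hcong : r * t1 + (u:ℤ) - w ≡ (u:ℤ) * 1 - (u:ℤ) * (m * mstar) [ZMOD n] := by
      calc r * t1 + (u:ℤ) - w
          ≡ (m*u) * (m - mstar) + (u:ℤ) - m*(m*u) [ZMOD n] :=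
            ((h_r.mul h_t).add_right _).sub h_w
      _ = (u:ℤ) * 1 - (u:ℤ) * (m * mstar) := by ring
    have hcong2 : r * t1 + (u:ℤ) - w ≡ 0 [ZMOD n] := by
      calc r * t1 + (u:ℤ) - w ≡ (u:ℤ) * 1 - (u:ℤ) * (m * mstar) [ZMOD n] := hcong
      _ ≡ (u:ℤ) * (m*mstar) - (u:ℤ) * (m * mstar) [ZMOD n] :=
          ((hmm1.mul_left (u:ℤ)).sub (Int.ModEq.refl _))
      _ = 0 := by ring
    simpa using hcong2.symm.dvd
  set c : ℤ := (r * t1 + (u:ℤ) - w) / n with hcdef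
  have hc : n * c = r * t1 + (u:ℤ) - w := Int.mul_ediv_cancel' hdvd
  have hc0 : 0 ≤ c := by
    rcases eq_or_lt_of_le hr0 with hr|hr
    · -- r = 0 : then u = 0 and w = 0
      have hdmu : n ∣ m * u := Int.dvd_of_emod_eq_zero hr.symm
      have hdu : n ∣ (u:ℤ) := (hmn.symm).dvd_of_dvd_mul_left hdmu
      have hu00 : (u:ℤ) = 0 := by
        by_contra hne
        have : n ≤ (u:ℤ) := Int.le_of_dvd (by omega) hdu
        omega
      have hw00 : w = 0 := by
        rw [hwdef, ← hr, mul_zero, Int.zero_emod]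
      have : n * c = 0 := by rw [hc, ← hr, hu00, hw00]; ring
      have hc00 : c = 0 := by
        rcases mul_eq_zero.mp this with h|h
        · omega
        · exact h
      omega
    · -- 0 < r
      have hpos : 0 < n * c := by nlinarith [hc]
      by_contra hneg
      push_neg at hneg
      nlinarith
  have hcle : c ≤ t1 := by
    have hle : n * c ≤ n * t1 := by nlinarith [hc]
    exact le_of_mul_le_mul_left hle hn
  -- per-term rewriting
  have hgi : ∀ i ∈ range t1.toNat,
      (2*(n*(i:ℤ)+u) - n*t1) * (2*(((1+m*t1)*(n*(i:ℤ)+u)) % (n*t1)) - n*t1)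
        = ((2*(u:ℤ) - n*t1)*(2*(u:ℤ) + 2*t1*r - n*t1)
            + (2*n*((2*(u:ℤ) - n*t1) + (2*(u:ℤ) + 2*t1*r - n*t1)))*(i:ℤ)
            + (4*n^2)*(i:ℤ)^2)
          - 2*(n*t1)*(if n*t1 ≤ n*(i:ℤ)+u + t1*r then ((2*(u:ℤ) - n*t1) + 2*n*(i:ℤ)) else 0) := by
    intro i hi
    simp only [Finset.mem_range] at hi
    have hi' : (i:ℤ) ≤ t1 - 1 := by omega
    have hJ1 : n*(i:ℤ)+u ≤ n*t1 - 1 := by nlinarith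
    have hJ0 : 0 ≤ n*(i:ℤ)+u := by positivity
    have hdecomp : (1+m*t1)*(n*(i:ℤ)+u) = ((n*(i:ℤ)+u) + t1*r) + (n*t1)*(m*(i:ℤ) + (m*u)/n) := by
      have hde := Int.mul_ediv_add_emod (m*(u:ℤ)) n
      linear_combination (-t1) * hde
    have hub : (n*(i:ℤ)+u) + t1*r < 2*(n*t1) := by nlinarith
    have hmod : ((1+m*t1)*(n*(i:ℤ)+u)) % (n*t1)
        = (n*(i:ℤ)+u) + t1*r - (if n*t1 ≤ n*(i:ℤ)+u + t1*r then n*t1 else 0) := by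
      rw [hdecomp, Int.add_mul_emod_self_left]
      split_ifs with hcase
      · rw [show (n*(i:ℤ)+u) + t1*r = (((n*(i:ℤ)+u) + t1*r) - n*t1) + (n*t1)*1 by ring,
          Int.add_mul_emod_self_left]
        rw [Int.emod_eq_of_lt (by omega) (by omega)]
        ring
      · rw [Int.emod_eq_of_lt (by nlinarith) (by omega)]
        ring
    rw [hmod]
    split_ifs with hcase
    · ring
    · ring
  rw [Finset.sum_congr rfl hgi, Finset.sum_sub_distrib, ← Finset.mul_sum, qsum]
  -- now evaluate the conditional sum
  have hfilter : Finset.filter (fun i : ℕ => n*t1 ≤ n*(i:ℤ)+u + t1*r) (range t1.toNat)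
      = Finset.Ico (t1 - c).toNat t1.toNat := by
    ext i
    simp only [Finset.mem_filter, Finset.mem_range, Finset.mem_Ico]
    constructor
    · rintro ⟨hiT, hcond⟩
      refine ⟨?_, hiT⟩
      have h1 : n * (t1 - c) = n*t1 - (r*t1 + u - w) := by linear_combination -hc
      have h2 : n*(i:ℤ) ≥ n*(t1-c) - w := by linarith
      have h3 : n*((t1-c) - 1) < n*(i:ℤ) := by nlinarith
      have h4 : (t1-c) - 1 < (i:ℤ) := lt_of_mul_lt_mul_left h3 hn.le
      omega
    · rintro ⟨hge, hiT⟩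
      refine ⟨hiT, ?_⟩
      have h0 : t1 - c ≤ (i:ℤ) := by omega
      have h1 : n * (t1 - c) = n*t1 - (r*t1 + u - w) := by linear_combination -hc
      have h2 : n*(t1-c) ≤ n*(i:ℤ) := mul_le_mul_of_nonneg_left h0 hn.le
      linarith
  rw [← Finset.sum_filter, hfilter]
  have hcast : (((t1 - c).toNat : ℤ)) = t1 - c := Int.toNat_of_nonneg (by omega)
  have haM : (t1 - c).toNat ≤ t1.toNat := by omega
  rw [qsumIco _ _ haM]
  -- final algebra
  have h2SA := two_mul_sum_range (t1 - c).toNat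
  have h2SI1 := two_mul_sum_range t1.toNat
  rw [hcast] at h2SA
  rw [hT] at h2SI1
  rw [hcast, hT]
  linear_combination (2*n*t1*r - 2*n*(n*t1)) * h2SI1 + (2*n*(n*t1)) * h2SA
    + (2*n*t1 - 2*n*t1^2 - 2*(u:ℤ)*t1 + 2*r*t1^2 - 2*w*t1 + (2*n*t1)*c) * hc

theorem key (n m mstar t1 : ℤ) (hn : 0 < n) (hm : Int.gcd m n = 1)
    (hinv : n ∣ m * mstar - 1) (ht1 : n < t1)
    (htc : n ∣ t1 - (m - mstar)) :
    Sded (1 + m * t1) (n * t1) = 2 / ((n : ℝ) * t1) + (t1 : ℝ) / n - 3 := by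
  have ht : 0 < t1 := hn.trans ht1
  have hk : 0 < n * t1 := mul_pos hn ht
  have hmn : IsCoprime m n := Int.isCoprime_iff_gcd_eq_one.mpr hm
  set T := t1.toNat with hTdef
  set N := n.toNat with hNdef
  have hT : ((T : ℤ)) = t1 := Int.toNat_of_nonneg ht.le
  have hN : ((N : ℤ)) = n := Int.toNat_of_nonneg hn.le
  -- coprimality of h and k
  have hcop : IsCoprime (1 + m * t1) (n * t1) := by
    apply IsCoprime.mul_right
    · -- with n : 1 + m*t1 = m*m + n * z
      obtain ⟨z, hz⟩ : (n:ℤ) ∣ (1 + m * t1) - m * m := by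
        obtain ⟨a, ha⟩ := hinv
        obtain ⟨b, hb⟩ := htc
        exact ⟨m * b - a, by linear_combination m * hb - ha⟩
      have : 1 + m * t1 = m * m + n * z := by linarith
      rw [this]
      exact ((hmn.mul_left hmn).add_mul_left_left z)
    · -- with t1
      have := (isCoprime_one_left (x := t1)).add_mul_left_left m
      rwa [mul_comm] at this
  -- the integer sum
  set g : ℤ → ℤ := fun j => (2*j - n*t1) * (2*(((1 + m*t1)*j) % (n*t1)) - n*t1) with hgdef
  set TOT : ℤ := ∑ j ∈ Finset.Icc (0:ℤ) (n*t1 - 1), g j with hTOTdef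
  -- Part B : the integer identity
  have hTOT : 6 * TOT = 4 * (n*t1) + 2 * n * t1^3 := by
    have hre : TOT = ∑ u ∈ range n.toNat, ∑ i ∈ range t1.toNat, g (n * i + u) := by
      rw [hTOTdef]
      exact reindex n t1 hn ht g
    rw [hre]
    have hinner : ∀ u ∈ range n.toNat,
        (∑ i ∈ range t1.toNat, g (n * i + u))
          = 4*n^2*(∑ i ∈ range t1.toNat, (i:ℤ)^2)
            + 4*n*(∑ i ∈ range t1.toNat, (i:ℤ))*(2*(u:ℤ) - n*t1)
            + t1*(2*(u:ℤ) - n*t1)^2 + 2*t1^2*((m*u)%n)*(2*(u:ℤ) - n)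
            - 2*t1*(((m*u)%n)*t1 + (u:ℤ) - ((m*((m*u)%n))%n))*(n*t1 + 2*(u:ℤ) - n)
            + 2*t1*(((m*u)%n)*t1 + (u:ℤ) - ((m*((m*u)%n))%n))^2 := by
      intro u hu
      simp only [Finset.mem_range] at hu
      have hu' : (u:ℤ) < n := by omega
      have := ded_inner_sum n m mstar t1 u hn hmn hinv ht1 htc hu'
      simpa [hgdef] using this
    rw [Finset.sum_congr rfl hinner]
    have hgroup : ∀ u ∈ range n.toNat,
        (4*n^2*(∑ i ∈ range t1.toNat, (i:ℤ)^2)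
            + 4*n*(∑ i ∈ range t1.toNat, (i:ℤ))*(2*(u:ℤ) - n*t1)
            + t1*(2*(u:ℤ) - n*t1)^2 + 2*t1^2*((m*u)%n)*(2*(u:ℤ) - n)
            - 2*t1*(((m*u)%n)*t1 + (u:ℤ) - ((m*((m*u)%n))%n))*(n*t1 + 2*(u:ℤ) - n)
            + 2*t1*(((m*u)%n)*t1 + (u:ℤ) - ((m*((m*u)%n))%n))^2)
        = ((4*n^2*(∑ i ∈ range t1.toNat, (i:ℤ)^2)
              - 4*n*(n*t1)*(∑ i ∈ range t1.toNat, (i:ℤ)) + t1*(n*t1)^2)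
            + (8*n*(∑ i ∈ range t1.toNat, (i:ℤ)) - 6*t1*(n*t1) + 2*t1*n)*(u:ℤ)
            + (2*t1)*(u:ℤ)^2)
          + (0 + (-2*(n*t1)*t1^2)*((m*u)%n) + (2*t1^3)*((m*u)%n)^2)
          + (2*t1*((n*t1)-n)*((m*((m*u)%n))%n) + 2*t1*((m*((m*u)%n))%n)^2)
          + 4*t1^2*((u:ℤ)*((m*u)%n) - ((m*u)%n)*((m*((m*u)%n))%n)) := by
      intro u _
      ring
    rw [Finset.sum_congr rfl hgroup, Finset.sum_add_distrib, Finset.sum_add_distrib,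
      Finset.sum_add_distrib, ← Finset.mul_sum, Finset.sum_sub_distrib]
    rw [bij_sum n m mstar hn hinv (fun v => 0 + (-2*(n*t1)*t1^2)*v + (2*t1^3)*v^2)]
    rw [bij_sum n m mstar hn hinv (fun v => 2*t1*((n*t1)-n)*((m*v)%n) + 2*t1*((m*v)%n)^2)]
    rw [show (∑ u ∈ range n.toNat, (2*t1*((n*t1)-n)*((m*(u:ℤ))%n) + 2*t1*((m*(u:ℤ))%n)^2))
        = ∑ u ∈ range n.toNat, (0 + (2*t1*((n*t1)-n))*((m*(u:ℤ))%n) + (2*t1)*((m*(u:ℤ))%n)^2) from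
      Finset.sum_congr rfl (fun u _ => by ring)]
    rw [bij_sum n m mstar hn hinv (fun v => 0 + (2*t1*((n*t1)-n))*v + (2*t1)*v^2)]
    rw [bij_sum n m mstar hn hinv (fun v => v*((m*v)%n))]
    rw [sub_self, mul_zero, add_zero]
    rw [qsum, qsum, qsum]
    have h2SI1 : 2 * (∑ i ∈ range t1.toNat, (i:ℤ)) = t1*(t1-1) := by
      rw [two_mul_sum_range, hT]
    have h6SI2 : 6 * (∑ i ∈ range t1.toNat, (i:ℤ)^2) = t1*(t1-1)*(2*t1-1) := by
      rw [six_mul_sum_range_sq, hT]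
    have h2SU1 : 2 * (∑ u ∈ range n.toNat, (u:ℤ)) = n*(n-1) := by
      rw [two_mul_sum_range, hN]
    have h6SU2 : 6 * (∑ u ∈ range n.toNat, (u:ℤ)^2) = n*(n-1)*(2*n-1) := by
      rw [six_mul_sum_range_sq, hN]
    rw [hN]
    linear_combination (24*n*(∑ u ∈ range n.toNat, (u:ℤ)) - 12*n^2*(n*t1)) * h2SI1
      + (4*n^3) * h6SI2
      + (-6*(n*t1)*t1*(t1+2) + 12*n*t1*(t1-1)) * h2SU1
      + (2*t1*(t1^2+2)) * h6SU2
  -- Part A : ded = (TOT - k²)/(4k²)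
  have hded : ded (1 + m*t1) (n*t1) = ((TOT : ℝ) - ((n*t1 : ℤ) : ℝ)^2) / (4 * ((n*t1 : ℤ):ℝ)^2) := by
    have hkR' : ((n*t1 : ℤ) : ℝ) ≠ 0 := by
      have : (0:ℤ) < n*t1 := hk
      exact_mod_cast this.ne'
    unfold ded
    have hins : Finset.Icc (1:ℤ) (n*t1) = insert (n*t1) (Finset.Icc 1 (n*t1 - 1)) := by
      ext x
      simp only [Finset.mem_Icc, Finset.mem_insert]
      omega
    rw [hins, Finset.sum_insert (by simp)]
    have hz1 : saw (((n*t1 : ℤ):ℝ) / ((n*t1 : ℤ):ℝ)) = 0 := by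
      rw [div_self hkR']
      exact_mod_cast saw_intCast 1
    have hz2 : saw (((1 + m*t1 : ℤ):ℝ) * ((n*t1 : ℤ):ℝ) / ((n*t1 : ℤ):ℝ)) = 0 := by
      rw [mul_div_assoc, div_self hkR', mul_one]
      exact saw_intCast _
    rw [hz1, hz2, zero_mul, zero_add]
    have hterm : ∀ j ∈ Finset.Icc (1:ℤ) (n*t1 - 1),
        saw ((j:ℝ) / ((n*t1 : ℤ):ℝ)) * saw (((1 + m*t1 : ℤ):ℝ) * (j:ℝ) / ((n*t1 : ℤ):ℝ))
          = ((g j : ℤ):ℝ) / (4 * ((n*t1 : ℤ):ℝ)^2) := by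
      intro j hj
      simp only [Finset.mem_Icc] at hj
      have hnd1 : ¬ (n*t1) ∣ j := by
        intro hdvd
        have := Int.le_of_dvd (by omega) hdvd
        omega
      have hnd2 : ¬ (n*t1) ∣ ((1 + m*t1) * j) := by
        intro hdvd
        exact hnd1 (hcop.symm.dvd_of_dvd_mul_left hdvd)
      have harg : ((1 + m*t1 : ℤ):ℝ) * (j:ℝ) / ((n*t1 : ℤ):ℝ)
          = (((1 + m*t1) * j : ℤ):ℝ) / ((n*t1 : ℤ):ℝ) := by
        push_cast
        ring
      rw [harg, saw_div_eq j (n*t1) hk hnd1, saw_div_eq _ _ hk hnd2,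
        Int.emod_eq_of_lt (by omega) (by omega)]
      simp only [hgdef]
      have hb := Int.emod_nonneg ((1 + m*t1) * j) hk.ne'
      push_cast
      field_simp
      ring
    rw [Finset.sum_congr rfl hterm, ← Finset.sum_div]
    have hsplit0 : TOT = (n*t1)^2 + ∑ j ∈ Finset.Icc (1:ℤ) (n*t1 - 1), g j := by
      rw [hTOTdef, show Finset.Icc (0:ℤ) (n*t1 - 1) = insert 0 (Finset.Icc 1 (n*t1 - 1)) by
        ext x
        simp only [Finset.mem_Icc, Finset.mem_insert]
        omega, Finset.sum_insert (by simp)]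
      congr 1
      simp only [hgdef]
      norm_num
      ring
    have : ∑ j ∈ Finset.Icc (1:ℤ) (n*t1 - 1), ((g j : ℤ):ℝ)
        = (TOT : ℝ) - ((n*t1 : ℤ):ℝ)^2 := by
      rw [hsplit0]
      push_cast
      ring
    rw [this]
  -- final assembly
  have hkR : ((n*t1 : ℤ) : ℝ) ≠ 0 := by
    push_cast
    positivity
  have hTOTR : (6:ℝ) * (TOT : ℝ) = 4 * ((n*t1:ℤ):ℝ) + 2 * n * t1^3 := by
    exact_mod_cast congrArg (Int.cast : ℤ → ℝ) hTOT
  unfold Sded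
  rw [hded]
  have hnR : (n:ℝ) ≠ 0 := by exact_mod_cast hn.ne'
  have htR : (t1:ℝ) ≠ 0 := by exact_mod_cast ht.ne'
  push_cast at hTOTR hkR ⊢
  field_simp
  linear_combination 2*hTOTR

theorem vary_t (n m mstar t : ℤ) (hn : 0 < n) (hm : Int.gcd m n = 1)
    (hinv : m * mstar ≡ 1 [ZMOD n]) (ht : 0 < t) (htc : t ≡ m - mstar [ZMOD n]) :
    ∀ l : ℤ, 1 ≤ l →
      Sded (1 + m * (t + l * n)) (n * (t + l * n)) =
        2 / ((n : ℝ) * (t + l * n)) + ((t : ℝ) + l * n) / n - 3 := by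
  intro l hl
  have hinv' : n ∣ m * mstar - 1 := by
    have h1 : n ∣ 1 - m * mstar := hinv.dvd
    have h2 : m * mstar - 1 = -(1 - m * mstar) := by ring
    rw [h2]
    exact dvd_neg.mpr h1
  have htc' : n ∣ (t + l * n) - (m - mstar) := by
    have h1 : n ∣ (m - mstar) - t := htc.dvd
    have h2 : (t + l * n) - (m - mstar) = -((m - mstar) - t) + n * l := by ring
    rw [h2]
    exact dvd_add (dvd_neg.mpr h1) (Dvd.intro l rfl)
  have ht1 : n < t + l * n := by
    have : n ≤ l * n := le_mul_of_one_le_left hn.le hl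
    omega
  rw [key n m mstar (t + l * n) hn hm hinv' ht1 htc']
  push_cast
  ring
end
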